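/- arXiv:0810.4402 — 4 statements merged into one kernel-verified Lean document; each statement's English description precedes it below -/
import Mathlib

section
/- For all ξ, ζ ∈ A_φ the following identity holds: −(1/2) ∫₀¹ ( B(ξ(t), ζ'(t)) − B(ζ(t), ξ'(t)) ) dt + (1/2) B(φ⁻¹(v_ξ), ζ(0)) − (1/2) B(φ⁻¹(v_ζ), ξ(0)) = ∫₀¹ B(ξ'(t), ζ(t)) dt − B(φ(ξ(0)), v_ζ) − (1/2) B(v_ξ, v_ζ). (The left-hand side is the contraction of ϖ := −Q^κ = −(1/2)∫₀¹ κ_t · κ̇_t − (1/2) a*θ^L · κ₀, where κ_t(ξ) = −ξ(t), with the pair (ξ, ζ); the identity is the paper's explicit formula for ϖ.) -/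
/-- The fiber `A_φ` of the Atiyah algebroid: smooth maps `ξ : ℝ → 𝔤` satisfying
`ξ (t+1) = φ (ξ t) + v` for all `t`, for the given constant `v = v_ξ` (the anchor). -/
def AtiyahFiber {𝔤 : Type*} [NormedAddCommGroup 𝔤] [NormedSpace ℝ 𝔤]
    (φ : 𝔤 → 𝔤) (ξ : ℝ → 𝔤) (v : 𝔤) : Prop :=
  ContDiff ℝ (⊤ : ℕ∞) ξ ∧ ∀ t : ℝ, ξ (t + 1) = φ (ξ t) + v

/-- For `ξ, ζ ∈ A_φ`:
`-(1/2)∫₀¹ (B(ξ, ζ') - B(ζ, ξ')) + (1/2)B(φ⁻¹ vξ, ζ 0) - (1/2)B(φ⁻¹ vζ, ξ 0)`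
`= ∫₀¹ B(ξ', ζ) - B(φ (ξ 0), vζ) - (1/2) B(vξ, vζ)`.
(The left side is the contraction of `ϖ = -Q^κ` with `(ξ, ζ)`.) -/
theorem varpi_explicit_formula
    {𝔤 : Type*} [NormedAddCommGroup 𝔤] [NormedSpace ℝ 𝔤] [FiniteDimensional ℝ 𝔤]
    (br : 𝔤 →ₗ[ℝ] 𝔤 →ₗ[ℝ] 𝔤)
    (br_alt : ∀ x : 𝔤, br x x = 0)
    (br_jacobi : ∀ x y z : 𝔤, br (br x y) z + br (br y z) x + br (br z x) y = 0)
    (B : 𝔤 →ₗ[ℝ] 𝔤 →ₗ[ℝ] ℝ)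
    (B_symm : ∀ x y : 𝔤, B x y = B y x)
    (B_inv : ∀ x y z : 𝔤, B (br x y) z = B x (br y z))
    (φ : 𝔤 ≃ₗ[ℝ] 𝔤)
    (hφbr : ∀ x y : 𝔤, φ (br x y) = br (φ x) (φ y))
    (hφB : ∀ x y : 𝔤, B (φ x) (φ y) = B x y)
    (ξ ζ : ℝ → 𝔤) (vξ vζ : 𝔤)
    (hξ : AtiyahFiber ⇑φ ξ vξ) (hζ : AtiyahFiber ⇑φ ζ vζ) :
    -(1/2 : ℝ) * (∫ t in (0:ℝ)..1, (B (ξ t) (deriv ζ t) - B (ζ t) (deriv ξ t)))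
        + (1/2 : ℝ) * B (φ.symm vξ) (ζ 0) - (1/2 : ℝ) * B (φ.symm vζ) (ξ 0)
      = (∫ t in (0:ℝ)..1, B (deriv ξ t) (ζ t))
        - B (φ (ξ 0)) vζ - (1/2 : ℝ) * B vξ vζ := by

  obtain ⟨hξs, hξp⟩ := hξ
  obtain ⟨hζs, hζp⟩ := hζ
  set Bc : 𝔤 →L[ℝ] 𝔤 →L[ℝ] ℝ := LinearMap.toContinuousLinearMap
      (((LinearMap.toContinuousLinearMap :
        (𝔤 →ₗ[ℝ] ℝ) ≃ₗ[ℝ] (𝔤 →L[ℝ] ℝ)) : (𝔤 →ₗ[ℝ] ℝ) →ₗ[ℝ] (𝔤 →L[ℝ] ℝ)) ∘ₗ B) with hBcdef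
  have hBc : ∀ x y : 𝔤, Bc x y = B x y := fun x y => rfl
  have hξd : Differentiable ℝ ξ := hξs.differentiable (by simp)
  have hζd : Differentiable ℝ ζ := hζs.differentiable (by simp)
  have hξc : Continuous ξ := hξd.continuous
  have hζc : Continuous ζ := hζd.continuous
  have hξ' : Continuous (deriv ξ) := hξs.continuous_deriv (mod_cast le_top)
  have hζ' : Continuous (deriv ζ) := hζs.continuous_deriv (mod_cast le_top)
  have hD : ∀ t : ℝ, HasDerivAt (fun t => Bc (ξ t) (ζ t))
      (Bc (deriv ξ t) (ζ t) + Bc (ξ t) (deriv ζ t)) t := by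
    intro t
    have h1 : HasDerivAt (fun t => Bc (ξ t)) (Bc (deriv ξ t)) t :=
      Bc.hasFDerivAt.comp_hasDerivAt t (hξd t).hasDerivAt
    exact h1.clm_apply (hζd t).hasDerivAt
  have c1 : Continuous (fun t : ℝ => Bc (deriv ξ t) (ζ t)) :=
    ((Bc.continuous.comp hξ')).clm_apply hζc
  have c2 : Continuous (fun t : ℝ => Bc (ξ t) (deriv ζ t)) :=
    ((Bc.continuous.comp hξc)).clm_apply hζ'
  have c3 : Continuous (fun t : ℝ => Bc (ζ t) (deriv ξ t)) :=
    ((Bc.continuous.comp hζc)).clm_apply hξ'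
  have i1 : IntervalIntegrable (fun t : ℝ => Bc (deriv ξ t) (ζ t)) MeasureTheory.volume 0 1 :=
    c1.intervalIntegrable 0 1
  have i2 : IntervalIntegrable (fun t : ℝ => Bc (ξ t) (deriv ζ t)) MeasureTheory.volume 0 1 :=
    c2.intervalIntegrable 0 1
  have hFTC : (∫ t in (0:ℝ)..1, (Bc (deriv ξ t) (ζ t) + Bc (ξ t) (deriv ζ t)))
      = Bc (ξ 1) (ζ 1) - Bc (ξ 0) (ζ 0) :=
    intervalIntegral.integral_eq_sub_of_hasDerivAt (fun t _ => hD t)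
      ((c1.add c2).intervalIntegrable 0 1)
  rw [intervalIntegral.integral_add i1 i2] at hFTC
  -- rewrite the statement integrands in terms of Bc
  have e1 : (∫ t in (0:ℝ)..1, (B (ξ t) (deriv ζ t) - B (ζ t) (deriv ξ t)))
      = (∫ t in (0:ℝ)..1, Bc (ξ t) (deriv ζ t)) - (∫ t in (0:ℝ)..1, Bc (deriv ξ t) (ζ t)) := by
    rw [← intervalIntegral.integral_sub i2 i1]
    congr 1
    funext t
    rw [hBc, hBc, B_symm (ζ t) (deriv ξ t)]
  have e2 : (∫ t in (0:ℝ)..1, B (deriv ξ t) (ζ t)) = (∫ t in (0:ℝ)..1, Bc (deriv ξ t) (ζ t)) := by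
    congr 1
  -- boundary values
  have hξ1 : ξ 1 = φ (ξ 0) + vξ := by have := hξp 0; rwa [zero_add] at this
  have hζ1 : ζ 1 = φ (ζ 0) + vζ := by have := hζp 0; rwa [zero_add] at this
  have hbd : Bc (ξ 1) (ζ 1) - Bc (ξ 0) (ζ 0)
      = B (φ (ξ 0)) vζ + B vξ (φ (ζ 0)) + B vξ vζ := by
    rw [hξ1, hζ1, hBc, hBc]
    have hBB : B (φ (ξ 0)) (φ (ζ 0)) = B (ξ 0) (ζ 0) := hφB _ _
    simp only [map_add, LinearMap.add_apply]
    linarith [hBB]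
  have hs1 : B (φ.symm vξ) (ζ 0) = B vξ (φ (ζ 0)) := by
    have h := hφB (φ.symm vξ) (ζ 0)
    rw [φ.apply_symm_apply] at h
    exact h.symm
  have hs2 : B (φ.symm vζ) (ξ 0) = B (φ (ξ 0)) vζ := by
    have h := hφB (φ.symm vζ) (ξ 0)
    rw [φ.apply_symm_apply] at h
    rw [← h, B_symm]
  rw [e1, e2, hs1, hs2]
  rw [hbd] at hFTC
  linarith [hFTC]
end

section
/- The bilinear form ϖ_φ on A_φ defined by ϖ_φ(ξ, ζ) := ∫₀¹ B(ξ'(t), ζ(t)) dt − B(φ(ξ(0)), v_ζ) − (1/2) B(v_ξ, v_ζ) is antisymmetric: ϖ_φ(ξ, ζ) = −ϖ_φ(ζ, ξ) for all ξ, ζ ∈ A_φ; in particular it defines an alternating 2-form on the fiber A_φ. -/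
/-- The 2-form `ϖ_φ` on the fiber `A_φ`:
`ϖ_φ(ξ,ζ) = ∫₀¹ B(ξ'(t), ζ(t)) dt - B(φ(ξ 0), v_ζ) - (1/2) B(v_ξ, v_ζ)`. -/
noncomputable def varpi {𝔤 : Type*} [NormedAddCommGroup 𝔤] [NormedSpace ℝ 𝔤]
    (B : 𝔤 →ₗ[ℝ] 𝔤 →ₗ[ℝ] ℝ) (φ : 𝔤 → 𝔤) (ξ ζ : ℝ → 𝔤) (vξ vζ : 𝔤) : ℝ :=
  (∫ t in (0:ℝ)..1, B (deriv ξ t) (ζ t)) - B (φ (ξ 0)) vζ - (1/2 : ℝ) * B vξ vζ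

/-- The bilinear form `ϖ_φ` on `A_φ` is antisymmetric:
`ϖ_φ(ξ, ζ) = -ϖ_φ(ζ, ξ)` for all `ξ, ζ ∈ A_φ`. -/
theorem varpi_antisymm
    {𝔤 : Type*} [NormedAddCommGroup 𝔤] [NormedSpace ℝ 𝔤] [FiniteDimensional ℝ 𝔤]
    (br : 𝔤 →ₗ[ℝ] 𝔤 →ₗ[ℝ] 𝔤)
    (br_alt : ∀ x : 𝔤, br x x = 0)
    (br_jacobi : ∀ x y z : 𝔤, br (br x y) z + br (br y z) x + br (br z x) y = 0)
    (B : 𝔤 →ₗ[ℝ] 𝔤 →ₗ[ℝ] ℝ)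
    (B_symm : ∀ x y : 𝔤, B x y = B y x)
    (B_inv : ∀ x y z : 𝔤, B (br x y) z = B x (br y z))
    (φ : 𝔤 ≃ₗ[ℝ] 𝔤)
    (hφbr : ∀ x y : 𝔤, φ (br x y) = br (φ x) (φ y))
    (hφB : ∀ x y : 𝔤, B (φ x) (φ y) = B x y)
    (ξ ζ : ℝ → 𝔤) (vξ vζ : 𝔤)
    (hξ : AtiyahFiber ⇑φ ξ vξ) (hζ : AtiyahFiber ⇑φ ζ vζ) :
    varpi B ⇑φ ξ ζ vξ vζ = - varpi B ⇑φ ζ ξ vζ vξ := by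

  obtain ⟨hξs, hξp⟩ := hξ
  obtain ⟨hζs, hζp⟩ := hζ
  set Bc : 𝔤 →L[ℝ] 𝔤 →L[ℝ] ℝ :=
    LinearMap.toContinuousLinearMap
      { toFun := fun x => LinearMap.toContinuousLinearMap (B x),
        map_add' := by intro x y; ext z; simp,
        map_smul' := by intro c x; ext z; simp } with hBcdef
  have hBc : ∀ x y : 𝔤, Bc x y = B x y := fun x y => rfl
  have hξd : Differentiable ℝ ξ := hξs.differentiable (by simp)
  have hζd : Differentiable ℝ ζ := hζs.differentiable (by simp)
  have hξc : Continuous (deriv ξ) := hξs.continuous_deriv (by exact_mod_cast le_top)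
  have hζc : Continuous (deriv ζ) := hζs.continuous_deriv (by exact_mod_cast le_top)
  have key : ∀ t : ℝ, HasDerivAt (fun s => B (ξ s) (ζ s))
      (B (deriv ξ t) (ζ t) + B (deriv ζ t) (ξ t)) t := by
    intro t
    have h1 : HasDerivAt (fun s => Bc (ξ s)) (Bc (deriv ξ t)) t :=
      Bc.hasFDerivAt.comp_hasDerivAt t (hξd t).hasDerivAt
    have h2 := h1.clm_apply (hζd t).hasDerivAt
    have e1 : (fun s => Bc (ξ s) (ζ s)) = fun s => B (ξ s) (ζ s) := rfl
    rw [e1] at h2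
    convert h2 using 1
    all_goals try rfl
    rw [hBc, hBc, B_symm (deriv ζ t) (ξ t)]
  have hcont1 : Continuous (fun t => (B (deriv ξ t)) (ζ t)) := by
    have := Bc.isBoundedBilinearMap.continuous.comp (hξc.prodMk hζs.continuous)
    exact this
  have hcont2 : Continuous (fun t => (B (deriv ζ t)) (ξ t)) := by
    have := Bc.isBoundedBilinearMap.continuous.comp (hζc.prodMk hξs.continuous)
    exact this
  have hint1 : IntervalIntegrable (fun t => (B (deriv ξ t)) (ζ t))
      MeasureTheory.volume 0 1 := hcont1.intervalIntegrable _ _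
  have hint2 : IntervalIntegrable (fun t => (B (deriv ζ t)) (ξ t))
      MeasureTheory.volume 0 1 := hcont2.intervalIntegrable _ _
  have ftc : (∫ t in (0:ℝ)..1, ((B (deriv ξ t)) (ζ t) + (B (deriv ζ t)) (ξ t)))
      = B (ξ 1) (ζ 1) - B (ξ 0) (ζ 0) := by
    exact intervalIntegral.integral_eq_sub_of_hasDerivAt (fun t _ => key t)
      (hint1.add hint2)
  rw [intervalIntegral.integral_add hint1 hint2] at ftc
  have hξ1 : ξ 1 = φ (ξ 0) + vξ := by simpa using hξp 0
  have hζ1 : ζ 1 = φ (ζ 0) + vζ := by simpa using hζp 0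
  have expand : B (ξ 1) (ζ 1) - B (ξ 0) (ζ 0)
      = B (φ (ξ 0)) vζ + B (φ (ζ 0)) vξ + B vξ vζ := by
    rw [hξ1, hζ1]
    simp only [map_add, LinearMap.add_apply]
    rw [hφB, B_symm vξ (φ (ζ 0))]
    ring
  have hswap : (∫ t in (0:ℝ)..1, (B (deriv ζ t)) (ξ t))
      = (B (φ (ξ 0)) vζ + B (φ (ζ 0)) vξ + B vξ vζ)
        - (∫ t in (0:ℝ)..1, (B (deriv ξ t)) (ζ t)) := by linarith [ftc, expand]
  simp only [varpi]
  rw [hswap, B_symm vζ vξ]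
  ring
end

section
/- Let φ', φ'' be Lie algebra automorphisms of 𝔤, and let ξ' ∈ A_{φ'} and ξ'' ∈ A_{φ''} satisfy ξ'(1) = ξ''(0), and suppose there is ε > 0 such that ξ' and ξ'' are each constant on the interval (−ε, ε). Then there exists a unique smooth map μ : ℝ → 𝔤 (the concatenation ξ'' * ξ') such that μ(t) = ξ'(2t) for t ∈ [0, 1/2], μ(t) = ξ''(2t − 1) for t ∈ [1/2, 1], and μ(t+1) = φ''(φ'(μ(t))) + φ''(v_{ξ'}) + v_{ξ''} for all t ∈ ℝ. In particular μ ∈ A_{φ''∘φ'} with v_μ = φ''(v_{ξ'}) + v_{ξ''}. -/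
section ConcatAux

variable {𝔤 : Type*} [NormedAddCommGroup 𝔤] [NormedSpace ℝ 𝔤]

lemma lequiv_one_apply (x : 𝔤) : (1 : 𝔤 ≃ₗ[ℝ] 𝔤) x = x := rfl

lemma zpow_apply_succ (e : 𝔤 ≃ₗ[ℝ] 𝔤) (n : ℤ) (x : 𝔤) :
    (e ^ (n+1)) x = e ((e ^ n) x) := by
  rw [add_comm, zpow_one_add]; rfl

lemma zpow_apply_succ' (e : 𝔤 ≃ₗ[ℝ] 𝔤) (n : ℤ) (x : 𝔤) :
    (e ^ (n+1)) x = (e ^ n) (e x) := by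
  rw [zpow_add_one]; rfl

/-- Geometric-type sum `w n = ∑_{0 ≤ k < n} e^k c` extended to all integers. -/
noncomputable def wgeo (e : 𝔤 ≃ₗ[ℝ] 𝔤) (c : 𝔤) (n : ℤ) : 𝔤 :=
  if 0 ≤ n then ∑ k ∈ Finset.range n.toNat, (e ^ (k : ℤ)) c
  else - ∑ k ∈ Finset.range (-n).toNat, (e ^ (n + k)) c

lemma wgeo_zero (e : 𝔤 ≃ₗ[ℝ] 𝔤) (c : 𝔤) : wgeo e c 0 = 0 := by
  simp [wgeo]

lemma wgeo_neg_eq (e : 𝔤 ≃ₗ[ℝ] 𝔤) (c : 𝔤) {n : ℤ} (hn : n ≤ 0) :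
    wgeo e c n = - ∑ k ∈ Finset.range (-n).toNat, (e ^ (n + k)) c := by
  rcases eq_or_lt_of_le hn with h0 | h0
  · subst h0; simp [wgeo]
  · rw [wgeo, if_neg (by omega)]

lemma wgeo_succ (e : 𝔤 ≃ₗ[ℝ] 𝔤) (c : 𝔤) (n : ℤ) :
    wgeo e c (n + 1) = e (wgeo e c n) + c := by
  rcases le_or_gt 0 n with hn | hn
  · have h1 : (0:ℤ) ≤ n + 1 := by omega
    have ht : (n+1).toNat = n.toNat + 1 := by omega
    rw [wgeo, wgeo, if_pos h1, if_pos hn, ht, Finset.sum_range_succ']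
    simp only [map_sum, Nat.cast_zero, zpow_zero, lequiv_one_apply]
    congr 1
    refine Finset.sum_congr rfl fun k _ => ?_
    rw [Nat.cast_add, Nat.cast_one, ← zpow_apply_succ]
  · obtain ⟨p, hp⟩ : ∃ p : ℕ, (-n).toNat = p + 1 := ⟨(-n).toNat - 1, by omega⟩
    have ht : (-(n+1)).toNat = p := by omega
    rw [wgeo_neg_eq e c (by omega : n + 1 ≤ 0), wgeo_neg_eq e c (by omega : n ≤ 0), ht, hp]
    simp only [map_neg, map_sum]
    have hsum : ∀ k ∈ Finset.range (p+1), e ((e ^ (n + (k:ℤ))) c) = (e ^ ((n+1) + (k:ℤ))) c := by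
      intro k _
      rw [← zpow_apply_succ]
      congr 1
      ring
    rw [Finset.sum_congr rfl hsum, Finset.sum_range_succ]
    have hlast : (n + 1 + (p : ℤ)) = 0 := by omega
    rw [hlast, zpow_zero, lequiv_one_apply]
    abel

lemma wgeo_succ' (e : 𝔤 ≃ₗ[ℝ] 𝔤) (c : 𝔤) (n : ℤ) :
    wgeo e c (n + 1) = wgeo e c n + (e ^ n) c := by
  rcases le_or_gt 0 n with hn | hn
  · have h1 : (0:ℤ) ≤ n + 1 := by omega
    have ht : (n+1).toNat = n.toNat + 1 := by omega
    have hc : ((n.toNat : ℤ)) = n := by omega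
    rw [wgeo, wgeo, if_pos h1, if_pos hn, ht, Finset.sum_range_succ, hc]
  · obtain ⟨p, hp⟩ : ∃ p : ℕ, (-n).toNat = p + 1 := ⟨(-n).toNat - 1, by omega⟩
    have ht : (-(n+1)).toNat = p := by omega
    rw [wgeo_neg_eq e c (by omega : n + 1 ≤ 0), wgeo_neg_eq e c (by omega : n ≤ 0), ht, hp]
    rw [Finset.sum_range_succ']
    have hcast : ∀ k ∈ Finset.range p, (e ^ (n + ((k+1 : ℕ):ℤ))) c = (e ^ (n + ((k:ℤ) + 1))) c := by
      intro k _
      norm_cast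
    have hsum : ∀ k ∈ Finset.range p, (e ^ (n + ((k:ℤ) + 1))) c = (e ^ ((n+1) + (k:ℤ))) c := by
      intro k _
      congr 1
      ring
    rw [Finset.sum_congr rfl hcast, Finset.sum_congr rfl hsum]
    simp only [Nat.cast_zero, add_zero]
    abel

end ConcatAux


/-- Uniqueness: any two functions satisfying the interval conditions and the
recurrence coincide. -/
lemma concat_unique_aux
    {𝔤 : Type*} [NormedAddCommGroup 𝔤] [NormedSpace ℝ 𝔤]
    (φ' φ'' : 𝔤 ≃ₗ[ℝ] 𝔤) (ξ' ξ'' : ℝ → 𝔤) (v' v'' : 𝔤)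
    (μ₁ μ₂ : ℝ → 𝔤)
    (h₁a : ∀ t ∈ Set.Icc (0 : ℝ) (1/2), μ₁ t = ξ' (2 * t))
    (h₁b : ∀ t ∈ Set.Icc (1/2 : ℝ) 1, μ₁ t = ξ'' (2 * t - 1))
    (h₁c : ∀ t : ℝ, μ₁ (t + 1) = φ'' (φ' (μ₁ t)) + (φ'' v' + v''))
    (h₂a : ∀ t ∈ Set.Icc (0 : ℝ) (1/2), μ₂ t = ξ' (2 * t))
    (h₂b : ∀ t ∈ Set.Icc (1/2 : ℝ) 1, μ₂ t = ξ'' (2 * t - 1))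
    (h₂c : ∀ t : ℝ, μ₂ (t + 1) = φ'' (φ' (μ₂ t)) + (φ'' v' + v'')) :
    μ₁ = μ₂ := by
  have hagree : ∀ s ∈ Set.Icc (0:ℝ) 1, μ₁ s = μ₂ s := by
    intro s hs
    rcases le_or_gt s (1/2) with h | h
    · rw [h₁a s ⟨hs.1, h⟩, h₂a s ⟨hs.1, h⟩]
    · rw [h₁b s ⟨h.le, hs.2⟩, h₂b s ⟨h.le, hs.2⟩]
  have hext : ∀ m : ℤ, ∀ s ∈ Set.Icc (0:ℝ) 1, μ₁ (s + (m:ℝ)) = μ₂ (s + (m:ℝ)) := by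
    intro m
    induction m using Int.induction_on with
    | zero => intro s hs; simpa using hagree s hs
    | succ k ih =>
        intro s hs
        have hcast : (s + (((k:ℤ) + 1 : ℤ) : ℝ)) = (s + ((k:ℤ):ℝ)) + 1 := by push_cast; ring
        rw [hcast, h₁c, h₂c, ih s hs]
    | pred k ih =>
        intro s hs
        have hcast : (s + ((-(k:ℤ) - 1 : ℤ) : ℝ)) + 1 = s + ((-(k:ℤ) : ℤ) : ℝ) := by
          push_cast; ring
        have hv := h₁c (s + ((-(k:ℤ) - 1 : ℤ) : ℝ))
        have hm := h₂c (s + ((-(k:ℤ) - 1 : ℤ) : ℝ))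
        rw [hcast] at hv hm
        have hih := ih s hs
        rw [hv, hm] at hih
        have h0 : φ'' (φ' (μ₁ (s + ((-(k:ℤ) - 1 : ℤ) : ℝ))))
            = φ'' (φ' (μ₂ (s + ((-(k:ℤ) - 1 : ℤ) : ℝ)))) := add_right_cancel hih
        exact φ'.injective (φ''.injective h0)
  funext t
  have h1 : Int.fract t ∈ Set.Icc (0:ℝ) 1 := ⟨Int.fract_nonneg t, (Int.fract_lt_one t).le⟩
  have h2 := hext ⌊t⌋ (Int.fract t) h1
  rwa [add_comm, Int.floor_add_fract] at h2



/-- Existence and uniqueness of the concatenation `ξ'' * ξ'` of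
composable elements `ξ' ∈ A_{φ'}`, `ξ'' ∈ A_{φ''}` (with `ξ' 1 = ξ'' 0`, both
constant near `0`): a smooth `μ` with `μ t = ξ' (2t)` on `[0, 1/2]`,
`μ t = ξ'' (2t-1)` on `[1/2, 1]`, and `μ (t+1) = φ''(φ'(μ t)) + (φ''(v_{ξ'}) + v_{ξ''})`.
In particular `μ ∈ A_{φ''∘φ'}` with anchor `φ''(v_{ξ'}) + v_{ξ''}`. -/
theorem concatenation_exists_unique
    {𝔤 : Type*} [NormedAddCommGroup 𝔤] [NormedSpace ℝ 𝔤] [FiniteDimensional ℝ 𝔤]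
    (br : 𝔤 →ₗ[ℝ] 𝔤 →ₗ[ℝ] 𝔤)
    (br_alt : ∀ x : 𝔤, br x x = 0)
    (br_jacobi : ∀ x y z : 𝔤, br (br x y) z + br (br y z) x + br (br z x) y = 0)
    (φ' φ'' : 𝔤 ≃ₗ[ℝ] 𝔤)
    (hφ' : ∀ x y : 𝔤, φ' (br x y) = br (φ' x) (φ' y))
    (hφ'' : ∀ x y : 𝔤, φ'' (br x y) = br (φ'' x) (φ'' y))
    (ξ' ξ'' : ℝ → 𝔤) (v' v'' : 𝔤)
    (hξ' : AtiyahFiber ⇑φ' ξ' v') (hξ'' : AtiyahFiber ⇑φ'' ξ'' v'')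
    (hmatch : ξ' 1 = ξ'' 0)
    (ε : ℝ) (hε : 0 < ε)
    (hconst' : ∀ t ∈ Set.Ioo (-ε) ε, ξ' t = ξ' 0)
    (hconst'' : ∀ t ∈ Set.Ioo (-ε) ε, ξ'' t = ξ'' 0) :
    ∃! μ : ℝ → 𝔤,
      ContDiff ℝ (⊤ : ℕ∞) μ ∧
      (∀ t ∈ Set.Icc (0 : ℝ) (1/2), μ t = ξ' (2 * t)) ∧
      (∀ t ∈ Set.Icc (1/2 : ℝ) 1, μ t = ξ'' (2 * t - 1)) ∧
      (∀ t : ℝ, μ (t + 1) = φ'' (φ' (μ t)) + (φ'' v' + v'')) := by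
  classical
  set e : 𝔤 ≃ₗ[ℝ] 𝔤 := φ'.trans φ'' with he
  set c : 𝔤 := φ'' v' + v'' with hc
  have happ : ∀ x : 𝔤, e x = φ'' (φ' x) := fun x => rfl
  -- constancy of ξ' and ξ'' near 1
  have hconst'1 : ∀ s ∈ Set.Ioo (1 - ε) (1 + ε), ξ' s = ξ' 1 := by
    intro s hs
    have h2 : ξ' (s - 1) = ξ' 0 := hconst' _ ⟨by linarith [hs.1], by linarith [hs.2]⟩
    have h1 := hξ'.2 (s - 1)
    rw [sub_add_cancel] at h1
    have h3 := hξ'.2 0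
    rw [zero_add] at h3
    rw [h1, h2, h3]
  have hconst''1 : ∀ s ∈ Set.Ioo (1 - ε) (1 + ε), ξ'' s = ξ'' 1 := by
    intro s hs
    have h2 : ξ'' (s - 1) = ξ'' 0 := hconst'' _ ⟨by linarith [hs.1], by linarith [hs.2]⟩
    have h1 := hξ''.2 (s - 1)
    rw [sub_add_cancel] at h1
    have h3 := hξ''.2 0
    rw [zero_add] at h3
    rw [h1, h2, h3]
  -- key gluing computation
  have hkey : ξ'' 1 = e (ξ' 0) + c := by
    have h1 := hξ''.2 0
    rw [zero_add] at h1
    have h2 := hξ'.2 0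
    rw [zero_add] at h2
    rw [h1, ← hmatch, h2, map_add, happ, hc]
    abel
  -- the small parameter
  set δ : ℝ := min ε 1 / 2 with hδ
  have hδ0 : 0 < δ := by
    have := lt_min hε one_pos
    rw [hδ]; positivity
  have h2δ : 2 * δ ≤ ε := by
    have := min_le_left ε 1
    rw [hδ]; linarith
  have hδh : δ ≤ 1/2 := by
    have := min_le_right ε 1
    rw [hδ]; linarith
  -- the base path and the candidate concatenation
  set base : ℝ → 𝔤 := fun r => if r ≤ 1/2 then ξ' (2*r) else ξ'' (2*r - 1) with hbase
  set F : ℝ → 𝔤 := fun t => (e ^ ⌊t⌋) (base (Int.fract t)) + wgeo e c ⌊t⌋ with hF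
  have hbase_le : ∀ r : ℝ, r ≤ 1/2 → base r = ξ' (2*r) := by
    intro r hr; rw [hbase]; simp only [if_pos hr]
  have hbase_gt : ∀ r : ℝ, ¬ (r ≤ 1/2) → base r = ξ'' (2*r - 1) := by
    intro r hr; rw [hbase]; simp only [if_neg hr]
  have hval : ∀ (n : ℤ) (s : ℝ), (n:ℝ) ≤ s → s < (n:ℝ) + 1 →
      F s = (e ^ n) (base (s - (n:ℝ))) + wgeo e c n := by
    intro n s h1 h2
    have hf : ⌊s⌋ = n := Int.floor_eq_iff.mpr ⟨h1, h2⟩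
    have hfr : Int.fract s = s - (n:ℝ) := by
      rw [show Int.fract s = s - (⌊s⌋:ℝ) from rfl, hf]
    show (e ^ ⌊s⌋) (base (Int.fract s)) + wgeo e c ⌊s⌋ = _
    rw [hf, hfr]
  -- F is locally constant near each integer
  have hnear : ∀ (m : ℤ), ∀ s ∈ Set.Ioo ((m:ℝ) - δ) ((m:ℝ) + δ),
      F s = (e ^ m) (ξ' 0) + wgeo e c m := by
    intro m s hs
    rcases le_or_gt (m:ℝ) s with h1 | h1
    · rw [hval m s h1 (by linarith [hs.2])]
      have hb : base (s - (m:ℝ)) = ξ' 0 := by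
        rw [hbase_le _ (by linarith [hs.2])]
        exact hconst' _ ⟨by linarith, by linarith [hs.2]⟩
      rw [hb]
    · have h0 : ((m - 1 : ℤ):ℝ) ≤ s := by push_cast; linarith [hs.1]
      have h2 : s < ((m-1:ℤ):ℝ) + 1 := by push_cast; linarith
      rw [hval (m-1) s h0 h2]
      have hb : base (s - ((m-1:ℤ):ℝ)) = ξ'' 1 := by
        rw [hbase_gt _ (by push_cast; linarith [hs.1])]
        exact hconst''1 _ ⟨by push_cast; linarith [hs.1], by push_cast; linarith⟩
      rw [hb, hkey, map_add, ← zpow_apply_succ']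
      have hm1 : (m - 1 + 1 : ℤ) = m := by ring
      have hw := wgeo_succ' e c (m-1)
      rw [hm1] at hw
      rw [hm1, hw]
      abel
  -- F is locally constant near each half-integer
  have hmid : ∀ (m : ℤ), ∀ s ∈ Set.Ioo ((m:ℝ) + 1/2 - 3*δ/4) ((m:ℝ) + 1/2 + 3*δ/4),
      F s = (e ^ m) (ξ' 1) + wgeo e c m := by
    intro m s hs
    have h1 : (m:ℝ) ≤ s := by linarith [hs.1]
    have h2 : s < (m:ℝ) + 1 := by linarith [hs.2]
    rw [hval m s h1 h2]
    have hb : base (s - (m:ℝ)) = ξ' 1 := by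
      by_cases hle : s - (m:ℝ) ≤ 1/2
      · rw [hbase_le _ hle]
        exact hconst'1 _ ⟨by linarith [hs.1], by linarith⟩
      · rw [hbase_gt _ hle]
        rw [hconst'' (2*(s - (m:ℝ)) - 1) ⟨by push_neg at hle; linarith, by linarith [hs.2]⟩]
        exact hmatch.symm
    rw [hb]
  -- values of F on the two open half-period intervals
  have hvalA : ∀ (m : ℤ), ∀ s ∈ Set.Ioo ((m:ℝ)) ((m:ℝ) + 1/2),
      F s = (e ^ m) (ξ' (2*(s - (m:ℝ)))) + wgeo e c m := by
    intro m s hs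
    rw [hval m s hs.1.le (by linarith [hs.2]), hbase_le _ (by linarith [hs.2])]
  have hvalB : ∀ (m : ℤ), ∀ s ∈ Set.Ioo ((m:ℝ) + 1/2) ((m:ℝ) + 1),
      F s = (e ^ m) (ξ'' (2*(s - (m:ℝ)) - 1)) + wgeo e c m := by
    intro m s hs
    rw [hval m s (by linarith [hs.1]) hs.2, hbase_gt _ (by push_neg; linarith [hs.1])]
  -- smoothness
  have hsmooth : ContDiff ℝ (⊤ : ℕ∞) F := by
    rw [contDiff_iff_contDiffAt]
    intro t
    have locci : ∀ (a b : ℝ), t ∈ Set.Ioo a b → ∀ f : ℝ → 𝔤, ContDiff ℝ (⊤:ℕ∞) f →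
        (∀ s ∈ Set.Ioo a b, F s = f s) → ContDiffAt ℝ (⊤:ℕ∞) F t := by
      intro a b hab f hf heq
      exact hf.contDiffAt.congr_of_eventuallyEq
        (Filter.eventuallyEq_of_mem (Ioo_mem_nhds hab.1 hab.2) heq)
    have smA : ∀ m : ℤ, ContDiff ℝ (⊤:ℕ∞)
        (fun s : ℝ => (e ^ m) (ξ' (2*(s - (m:ℝ)))) + wgeo e c m) :=
      fun m => (((LinearMap.toContinuousLinearMap (e ^ m).toLinearMap).contDiff).comp
        (hξ'.1.comp (contDiff_const.mul (contDiff_id.sub contDiff_const)))).add contDiff_const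
    have smB : ∀ m : ℤ, ContDiff ℝ (⊤:ℕ∞)
        (fun s : ℝ => (e ^ m) (ξ'' (2*(s - (m:ℝ)) - 1)) + wgeo e c m) :=
      fun m => (((LinearMap.toContinuousLinearMap (e ^ m).toLinearMap).contDiff).comp
        (hξ''.1.comp ((contDiff_const.mul (contDiff_id.sub contDiff_const)).sub
          contDiff_const))).add contDiff_const
    set n : ℤ := ⌊t⌋ with hn
    have ht1 : (n:ℝ) ≤ t := Int.floor_le t
    have ht2 : t < (n:ℝ) + 1 := Int.lt_floor_add_one t
    rcases lt_or_ge (t - (n:ℝ)) δ with hA | hA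
    · exact locci ((n:ℝ) - δ) ((n:ℝ) + δ) ⟨by linarith, by linarith⟩ _ contDiff_const
        (hnear n)
    rcases lt_or_ge (1 - δ) (t - (n:ℝ)) with hB | hB
    · refine locci ((((n+1:ℤ)):ℝ) - δ) ((((n+1:ℤ)):ℝ) + δ)
        ⟨by push_cast; linarith, by push_cast; linarith⟩ _ contDiff_const (hnear (n+1))
    rcases lt_or_ge (t - (n:ℝ)) (1/2 - δ/2) with hD | hD
    · exact locci ((n:ℝ)) ((n:ℝ) + 1/2) ⟨by linarith, by linarith⟩ _ (smA n) (hvalA n)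
    rcases lt_or_ge (1/2 + δ/2) (t - (n:ℝ)) with hE | hE
    · exact locci ((n:ℝ) + 1/2) ((n:ℝ) + 1) ⟨by linarith, by linarith⟩ _ (smB n) (hvalB n)
    · exact locci ((n:ℝ) + 1/2 - 3*δ/4) ((n:ℝ) + 1/2 + 3*δ/4)
        ⟨by linarith, by linarith⟩ _ contDiff_const (hmid n)
  -- interval conditions
  have hP2 : ∀ t ∈ Set.Icc (0:ℝ) (1/2), F t = ξ' (2 * t) := by
    intro t ht
    have h0 : ((0:ℤ):ℝ) ≤ t := by exact_mod_cast ht.1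
    have h1 : t < ((0:ℤ):ℝ) + 1 := by push_cast; linarith [ht.2]
    rw [hval 0 t h0 h1, hbase_le _ (by push_cast; linarith [ht.2]), wgeo_zero, zpow_zero,
      lequiv_one_apply, add_zero]
    norm_num
  have hP3 : ∀ t ∈ Set.Icc (1/2:ℝ) 1, F t = ξ'' (2 * t - 1) := by
    intro t ht
    rcases eq_or_lt_of_le ht.2 with h1 | h1
    · subst h1
      have h0 : ((1:ℤ):ℝ) ≤ (1:ℝ) := by norm_num
      have h2 : (1:ℝ) < ((1:ℤ):ℝ) + 1 := by norm_num
      rw [hval 1 1 h0 h2]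
      have hb : base (1 - ((1:ℤ):ℝ)) = ξ' 0 := by
        rw [show (1:ℝ) - ((1:ℤ):ℝ) = 0 by norm_num, hbase_le 0 (by norm_num)]
        norm_num
      have hw : wgeo e c 1 = c := by
        have := wgeo_succ' e c 0
        rw [zero_add, wgeo_zero, zpow_zero, lequiv_one_apply, zero_add] at this
        exact this
      rw [hb, hw, zpow_one, ← hkey]
      norm_num
    · have h0 : ((0:ℤ):ℝ) ≤ t := by push_cast; linarith [ht.1]
      have h2 : t < ((0:ℤ):ℝ) + 1 := by push_cast; linarith
      rw [hval 0 t h0 h2, wgeo_zero, zpow_zero, lequiv_one_apply, add_zero]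
      push_cast
      rw [sub_zero]
      rcases eq_or_lt_of_le ht.1 with hhalf | hhalf
      · rw [hbase_le _ (le_of_eq hhalf.symm), ← hhalf]
        norm_num
        rw [hmatch]
      · rw [hbase_gt _ (by linarith)]
  -- the recurrence
  have hP4 : ∀ t : ℝ, F (t + 1) = φ'' (φ' (F t)) + (φ'' v' + v'') := by
    intro t
    have hfl : ⌊t + 1⌋ = ⌊t⌋ + 1 := Int.floor_add_one t
    have hfr : Int.fract (t + 1) = Int.fract t := Int.fract_add_one t
    show (e ^ ⌊t+1⌋) (base (Int.fract (t+1))) + wgeo e c ⌊t+1⌋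
      = φ'' (φ' ((e ^ ⌊t⌋) (base (Int.fract t)) + wgeo e c ⌊t⌋)) + (φ'' v' + v'')
    rw [hfl, hfr, zpow_apply_succ, wgeo_succ, ← happ, ← hc, map_add e]
    abel
  refine ⟨F, ⟨hsmooth, hP2, hP3, hP4⟩, ?_⟩
  intro ν hν
  exact concat_unique_aux φ' φ'' ξ' ξ'' v' v'' ν F hν.2.1 hν.2.2.1 hν.2.2.2 hP2 hP3 hP4
end

section
/- Let φ', φ'' be Lie algebra automorphisms of 𝔤 preserving B, let ξ', ζ' ∈ A_{φ'} and ξ'', ζ'' ∈ A_{φ''} satisfy ξ'(1) = ξ''(0) and ζ'(1) = ζ''(0), and let μ_ξ, μ_ζ : ℝ → 𝔤 be smooth maps with μ_ξ(t) = ξ'(2t) and μ_ζ(t) = ζ'(2t) for t ∈ [0, 1/2], μ_ξ(t) = ξ''(2t−1) and μ_ζ(t) = ζ''(2t−1) for t ∈ [1/2, 1], and μ_ξ(t+1) = φ''(φ'(μ_ξ(t))) + φ''(v_{ξ'}) + v_{ξ''}, μ_ζ(t+1) = φ''(φ'(μ_ζ(t))) + φ''(v_{ζ'}) + v_{ζ''}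 for all t (i.e. μ_ξ = ξ''*ξ' and μ_ζ = ζ''*ζ' are the concatenations). Then ϖ_{φ''∘φ'}(μ_ξ, μ_ζ) = ϖ_{φ''}(ξ'', ζ'') + ϖ_{φ'}(ξ', ζ') + (1/2)( B(φ''(v_{ξ'}), v_{ζ''}) − B(φ''(v_{ζ'}), v_{ξ''}) ). (This is the fiberwise form of the paper's fusion property mult_A^! ϖ = pr₁^! ϖ + pr₂^! ϖ − λ, where λ = (1/2) pr₁*θ^L · pr₂*θ^R ∈ Ω²(G×G).) -/
open MeasureTheory intervalIntegral

/-- Continuity of `t ↦ B (f t) (g t)` for a bilinear form on a finite-dimensional space. -/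
lemma contB_aux {𝔤 : Type*} [NormedAddCommGroup 𝔤] [NormedSpace ℝ 𝔤] [FiniteDimensional ℝ 𝔤]
    (B : 𝔤 →ₗ[ℝ] 𝔤 →ₗ[ℝ] ℝ) (f g : ℝ → 𝔤) (hf : Continuous f) (hg : Continuous g) :
    Continuous (fun t => B (f t) (g t)) := by
  let Bc : 𝔤 →ₗ[ℝ] (𝔤 →L[ℝ] ℝ) :=
    (LinearMap.toContinuousLinearMap : (𝔤 →ₗ[ℝ] ℝ) ≃ₗ[ℝ] (𝔤 →L[ℝ] ℝ)).toLinearMap.comp B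
  have hBc : Continuous Bc := Bc.continuous_of_finiteDimensional
  have : (fun t => B (f t) (g t)) = fun t => (Bc (f t)) (g t) := rfl
  rw [this]
  exact (hBc.comp hf).clm_apply hg

/-- Change of variables for the integrand of `varpi` along an affine reparametrization. -/
lemma seg_aux {𝔤 : Type*} [NormedAddCommGroup 𝔤] [NormedSpace ℝ 𝔤] [FiniteDimensional ℝ 𝔤]
    (B : 𝔤 →ₗ[ℝ] 𝔤 →ₗ[ℝ] ℝ) (ξ ζ μ ν : ℝ → 𝔤)
    (hξ : ContDiff ℝ (⊤ : ℕ∞) ξ) (hμ : ContDiff ℝ (⊤ : ℕ∞) μ)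
    (a b c d : ℝ) (hab : a < b) (hc : c ≠ 0)
    (hμe : ∀ t ∈ Set.Icc a b, μ t = ξ (c * t + d))
    (hνe : ∀ t ∈ Set.Icc a b, ν t = ζ (c * t + d)) :
    ∫ t in a..b, B (deriv μ t) (ν t) = ∫ u in (c*a+d)..(c*b+d), B (deriv ξ u) (ζ u) := by
  have h1 : ∀ t ∈ Set.Ioo a b, deriv μ t = c • deriv ξ (c*t+d) := by
    intro t ht
    have hne : μ =ᶠ[nhds t] fun s => ξ (c*s+d) :=
      Filter.eventually_of_mem (Ioo_mem_nhds ht.1 ht.2)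
        (fun s hs => hμe s (Set.Ioo_subset_Icc_self hs))
    rw [hne.deriv_eq]
    have h2 : HasDerivAt (fun s : ℝ => c*s+d) c t := by
      simpa using ((hasDerivAt_id t).const_mul c).add_const d
    have h3 : HasDerivAt ξ (deriv ξ (c*t+d)) (c*t+d) :=
      (hξ.differentiable (by simp) (c*t+d)).hasDerivAt
    exact (h3.scomp t h2).deriv
  have hb0 : ∀ᵐ x : ℝ ∂volume, x ≠ b := by
    rw [MeasureTheory.ae_iff]
    simpa using Real.volume_singleton (x := b)
  have hcong : ∫ t in a..b, B (deriv μ t) (ν t)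
      = ∫ t in a..b, c * B (deriv ξ (c*t+d)) (ζ (c*t+d)) := by
    apply intervalIntegral.integral_congr_ae
    filter_upwards [hb0] with x hx hmem
    rw [Set.uIoc_of_le hab.le] at hmem
    have hxo : x ∈ Set.Ioo a b := ⟨hmem.1, lt_of_le_of_ne hmem.2 hx⟩
    rw [h1 x hxo, hνe x (Set.Ioo_subset_Icc_self hxo), _root_.map_smul, LinearMap.smul_apply,
      smul_eq_mul]
  rw [hcong, intervalIntegral.integral_const_mul]
  rw [intervalIntegral.integral_comp_mul_add (fun u => B (deriv ξ u) (ζ u)) hc d]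
  rw [smul_eq_mul, ← mul_assoc, mul_inv_cancel₀ hc, one_mul]

/-- fusion: for concatenations `μ_ξ = ξ'' * ξ'` and `μ_ζ = ζ'' * ζ'`,
`ϖ_{φ''∘φ'}(μ_ξ, μ_ζ) = ϖ_{φ''}(ξ'', ζ'') + ϖ_{φ'}(ξ', ζ')`
`+ (1/2)(B(φ''(v_{ξ'}), v_{ζ''}) - B(φ''(v_{ζ'}), v_{ξ''}))`. -/
theorem varpi_fusion
    {𝔤 : Type*} [NormedAddCommGroup 𝔤] [NormedSpace ℝ 𝔤] [FiniteDimensional ℝ 𝔤]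
    (br : 𝔤 →ₗ[ℝ] 𝔤 →ₗ[ℝ] 𝔤)
    (br_alt : ∀ x : 𝔤, br x x = 0)
    (br_jacobi : ∀ x y z : 𝔤, br (br x y) z + br (br y z) x + br (br z x) y = 0)
    (B : 𝔤 →ₗ[ℝ] 𝔤 →ₗ[ℝ] ℝ)
    (B_symm : ∀ x y : 𝔤, B x y = B y x)
    (B_inv : ∀ x y z : 𝔤, B (br x y) z = B x (br y z))
    (φ' φ'' : 𝔤 ≃ₗ[ℝ] 𝔤)
    (hφ'B : ∀ x y : 𝔤, B (φ' x) (φ' y) = B x y)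
    (hφ''B : ∀ x y : 𝔤, B (φ'' x) (φ'' y) = B x y)
    (ξ' ζ' ξ'' ζ'' : ℝ → 𝔤) (vξ' vζ' vξ'' vζ'' : 𝔤)
    (hξ' : AtiyahFiber ⇑φ' ξ' vξ') (hζ' : AtiyahFiber ⇑φ' ζ' vζ')
    (hξ'' : AtiyahFiber ⇑φ'' ξ'' vξ'') (hζ'' : AtiyahFiber ⇑φ'' ζ'' vζ'')
    (hmatchξ : ξ' 1 = ξ'' 0) (hmatchζ : ζ' 1 = ζ'' 0)
    (μξ μζ : ℝ → 𝔤)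
    (hμξ_smooth : ContDiff ℝ (⊤ : ℕ∞) μξ) (hμζ_smooth : ContDiff ℝ (⊤ : ℕ∞) μζ)
    (hμξ_left : ∀ t ∈ Set.Icc (0 : ℝ) (1/2), μξ t = ξ' (2 * t))
    (hμζ_left : ∀ t ∈ Set.Icc (0 : ℝ) (1/2), μζ t = ζ' (2 * t))
    (hμξ_right : ∀ t ∈ Set.Icc (1/2 : ℝ) 1, μξ t = ξ'' (2 * t - 1))
    (hμζ_right : ∀ t ∈ Set.Icc (1/2 : ℝ) 1, μζ t = ζ'' (2 * t - 1))
    (hμξ_per : ∀ t : ℝ, μξ (t + 1) = φ'' (φ' (μξ t)) + (φ'' vξ' + vξ''))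
    (hμζ_per : ∀ t : ℝ, μζ (t + 1) = φ'' (φ' (μζ t)) + (φ'' vζ' + vζ'')) :
    varpi B (fun x => φ'' (φ' x)) μξ μζ (φ'' vξ' + vξ'') (φ'' vζ' + vζ'')
      = varpi B ⇑φ'' ξ'' ζ'' vξ'' vζ'' + varpi B ⇑φ' ξ' ζ' vξ' vζ'
        + (1/2 : ℝ) * (B (φ'' vξ') vζ'' - B (φ'' vζ') vξ'') := by
  have hcont : Continuous (fun t => B (deriv μξ t) (μζ t)) :=
    contB_aux B _ _ (hμξ_smooth.continuous_deriv (mod_cast le_top)) hμζ_smooth.continuous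
  have hsplit : ∫ t in (0:ℝ)..1, B (deriv μξ t) (μζ t)
      = (∫ t in (0:ℝ)..(1/2), B (deriv μξ t) (μζ t))
        + ∫ t in (1/2:ℝ)..1, B (deriv μξ t) (μζ t) :=
    (intervalIntegral.integral_add_adjacent_intervals
      (hcont.intervalIntegrable _ _) (hcont.intervalIntegrable _ _)).symm
  have hL : ∫ t in (0:ℝ)..(1/2), B (deriv μξ t) (μζ t)
      = ∫ u in (0:ℝ)..1, B (deriv ξ' u) (ζ' u) := by
    have h := seg_aux B ξ' ζ' μξ μζ hξ'.1 hμξ_smooth 0 (1/2) 2 0 (by norm_num) (by norm_num)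
      (fun t ht => by simpa using hμξ_left t ht)
      (fun t ht => by simpa using hμζ_left t ht)
    norm_num at h
    exact h
  have hR : ∫ t in (1/2:ℝ)..1, B (deriv μξ t) (μζ t)
      = ∫ u in (0:ℝ)..1, B (deriv ξ'' u) (ζ'' u) := by
    have h := seg_aux B ξ'' ζ'' μξ μζ hξ''.1 hμξ_smooth (1/2) 1 2 (-1) (by norm_num) (by norm_num)
      (fun t ht => by rw [hμξ_right t ht, sub_eq_add_neg])
      (fun t ht => by rw [hμζ_right t ht, sub_eq_add_neg])
    norm_num at h
    exact h
  have hμξ0 : μξ 0 = ξ' 0 := by simpa using hμξ_left 0 (by norm_num)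
  have hξ''0 : ξ'' 0 = φ' (ξ' 0) + vξ' := by
    rw [← hmatchξ]
    simpa using hξ'.2 0
  simp only [varpi]
  rw [hsplit, hL, hR, hμξ0, hξ''0]
  simp only [map_add, LinearMap.add_apply]
  linear_combination (-1 : ℝ) * hφ''B (φ' (ξ' 0)) vζ' - (1/2 : ℝ) * hφ''B vξ' vζ'
    + (1/2 : ℝ) * B_symm (φ'' vζ') vξ''
end
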